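/- Let p be an N×N stochastic matrix (N ≥ 2) on state space X that is irreducible, and let r ∈ X. Then the reduced matrix on X \ {r} defined by _r p_{ij} = p_{ij} + p_{ir} p_{rj}/(1 - p_{rr}) is well-defined (p_{rr} < 1) and irreducible on X \ {r}. -/
import Mathlib


/-- A stochastic matrix on a finite state space is irreducible if every state leads
to every state in a positive number of steps with positive probability. -/
def MatIrreducible {X : Type*} [Fintype X] [DecidableEq X] (p : Matrix X X ℝ) : Prop :=
  ∀ i j : X, ∃ n : ℕ, 0 < n ∧ 0 < (p ^ n) i j

section Aux

variable {Y : Type*} [Fintype Y] [DecidableEq Y]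

lemma pow_entry_nonneg (p : Matrix Y Y ℝ) (h : ∀ i j, 0 ≤ p i j) :
    ∀ n i j, 0 ≤ (p ^ n) i j := by
  intro n
  induction n with
  | zero =>
    intro i j
    rw [pow_zero]
    by_cases hij : i = j <;> simp [Matrix.one_apply, hij]
  | succ n ih =>
    intro i j
    rw [pow_succ, Matrix.mul_apply]
    exact Finset.sum_nonneg fun k _ => mul_nonneg (ih i k) (h k j)

lemma pow_succ_entry_pos_elim (p : Matrix Y Y ℝ) (h : ∀ i j, 0 ≤ p i j)
    {n : ℕ} {i j : Y} (hp : 0 < (p ^ (n + 1)) i j) :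
    ∃ k, 0 < p i k ∧ 0 < (p ^ n) k j := by
  by_contra hc
  push_neg at hc
  rw [pow_succ', Matrix.mul_apply] at hp
  have hz : ∀ k ∈ Finset.univ, p i k * (p ^ n) k j = 0 := by
    intro k _
    rcases (h i k).lt_or_eq with hpos | heq
    · have := hc k hpos
      have := pow_entry_nonneg p h n k j
      have : (p ^ n) k j = 0 := le_antisymm ‹_› ‹_›
      rw [this, mul_zero]
    · rw [← heq, zero_mul]
  rw [Finset.sum_eq_zero hz] at hp
  exact lt_irrefl 0 hp

lemma step_pos (q : Matrix Y Y ℝ) (h : ∀ i j, 0 ≤ q i j)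
    {m : ℕ} {a c b : Y} (h1 : 0 < q a c) (h2 : 0 < (q ^ m) c b) :
    0 < (q ^ (m + 1)) a b := by
  rw [pow_succ', Matrix.mul_apply]
  apply Finset.sum_pos'
  · intro k _
    exact mul_nonneg (h a k) (pow_entry_nonneg q h m k b)
  · exact ⟨c, Finset.mem_univ c, mul_pos h1 h2⟩

lemma pow_zero_entry_pos (p : Matrix Y Y ℝ) {i j : Y} (hp : 0 < (p ^ 0) i j) :
    i = j := by
  rw [pow_zero] at hp
  by_contra hij
  simp [Matrix.one_apply, hij] at hp

end Aux

/-- The one-step phase-space reduction of an irreducible stochastic matrix is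
well defined (`p r r < 1`) and irreducible on `X \ {r}`. -/
theorem reduced_matrix_irreducible {X : Type*} [Fintype X] [DecidableEq X]
    (hcard : 2 ≤ Fintype.card X)
    (p : Matrix X X ℝ) (hnn : ∀ i j, 0 ≤ p i j) (hrow : ∀ i, ∑ j, p i j = 1)
    (hirr : MatIrreducible p) (r : X) :
    p r r < 1 ∧
      MatIrreducible (Matrix.of fun i j : {i : X // i ≠ r} =>
        p i.1 j.1 + p i.1 r * p r j.1 / (1 - p r r)) := by
  have hle : p r r ≤ 1 := by
    calc p r r ≤ ∑ j, p r j :=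
          Finset.single_le_sum (fun j _ => hnn r j) (Finset.mem_univ r)
      _ = 1 := hrow r
  have h1 : p r r < 1 := by
    rcases hle.lt_or_eq with h | h
    · exact h
    exfalso
    obtain ⟨s, hs⟩ := Fintype.exists_ne_of_one_lt_card (by omega) r
    obtain ⟨n, hn, hpn⟩ := hirr r s
    -- all off-diagonal entries of row r vanish
    have hz : ∀ j, j ≠ r → p r j = 0 := by
      intro j hj
      have hsum : p r r + ∑ k ∈ Finset.univ.erase r, p r k = 1 := by
        rw [Finset.add_sum_erase _ _ (Finset.mem_univ r)]
        exact hrow r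
      have hzero : ∑ k ∈ Finset.univ.erase r, p r k = 0 := by linarith
      have := (Finset.sum_eq_zero_iff_of_nonneg
        (fun k _ => hnn r k)).1 hzero j (Finset.mem_erase.2 ⟨hj, Finset.mem_univ j⟩)
      exact this
    have hzn : ∀ m, (p ^ m) r s = 0 := by
      intro m
      induction m with
      | zero => simp [Matrix.one_apply, (Ne.symm hs : r ≠ s)]
      | succ m ih =>
        rw [pow_succ', Matrix.mul_apply]
        apply Finset.sum_eq_zero
        intro k _
        by_cases hk : k = r
        · subst hk; rw [ih, mul_zero]
        · rw [hz k hk, zero_mul]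
    rw [hzn n] at hpn
    exact lt_irrefl 0 hpn
  have hden : 0 < 1 - p r r := by linarith
  set q : Matrix {i : X // i ≠ r} {i : X // i ≠ r} ℝ :=
    Matrix.of fun i j : {i : X // i ≠ r} =>
      p i.1 j.1 + p i.1 r * p r j.1 / (1 - p r r) with hq
  have hq_apply : ∀ a b : {i : X // i ≠ r},
      q a b = p a.1 b.1 + p a.1 r * p r b.1 / (1 - p r r) := by
    intro a b; rfl
  have hqnn : ∀ a b, 0 ≤ q a b := by
    intro a b
    rw [hq_apply]
    exact add_nonneg (hnn _ _)
      (div_nonneg (mul_nonneg (hnn _ _) (hnn _ _)) hden.le)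
  -- Lemma D: from r we can reach j ≠ r first hitting a state k ≠ r
  have D : ∀ t : ℕ, ∀ j : X, j ≠ r → 0 < (p ^ t) r j →
      ∃ k, k ≠ r ∧ 0 < p r k ∧
        (k = j ∨ ∃ s, 1 ≤ s ∧ s < t ∧ 0 < (p ^ s) k j) := by
    intro t
    induction t with
    | zero =>
      intro j hj hp0
      exact absurd (pow_zero_entry_pos p hp0) (Ne.symm hj)
    | succ t ih =>
      intro j hj hp0
      obtain ⟨k, hrk, hkj⟩ := pow_succ_entry_pos_elim p hnn hp0
      by_cases hk : k = r
      · rw [hk] at hkj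
        obtain ⟨k', hk'r, hrk', hc⟩ := ih j hj hkj
        refine ⟨k', hk'r, hrk', ?_⟩
        rcases hc with h' | hh
        · exact Or.inl h'
        · obtain ⟨s, hs1, hst, hps⟩ := hh
          exact Or.inr ⟨s, hs1, by omega, hps⟩
      · rcases Nat.eq_zero_or_pos t with h0 | ht
        · subst h0
          exact ⟨k, hk, hrk, Or.inl (pow_zero_entry_pos p hkj)⟩
        · exact ⟨k, hk, hrk, Or.inr ⟨t, ht, Nat.lt_succ_self t, hkj⟩⟩
  -- Lemma C: p-connectivity between non-r states gives q-connectivity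
  have C : ∀ n : ℕ, ∀ i j : X, ∀ hi : i ≠ r, ∀ hj : j ≠ r, 1 ≤ n →
      0 < (p ^ n) i j → ∃ m, 1 ≤ m ∧ 0 < (q ^ m) ⟨i, hi⟩ ⟨j, hj⟩ := by
    intro n
    induction n using Nat.strong_induction_on with
    | _ n IH =>
      intro i j hi hj hn hp0
      obtain ⟨t, rfl⟩ : ∃ t, n = t + 1 := ⟨n - 1, by omega⟩
      obtain ⟨k, hik, hkj⟩ := pow_succ_entry_pos_elim p hnn hp0
      by_cases hk : k = r
      · rw [hk] at hik hkj
        -- i → r, then from r reach j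
        obtain ⟨k', hk'r, hrk', hc⟩ := D t j hj hkj
        have hq_ik : 0 < q ⟨i, hi⟩ ⟨k', hk'r⟩ := by
          rw [hq_apply]
          have hpos : 0 < p i r * p r k' / (1 - p r r) :=
            div_pos (mul_pos hik hrk') hden
          have := hnn i k'
          linarith
        rcases hc with rfl | ⟨s, hs1, hst, hps⟩
        · exact ⟨1, le_refl 1, by simpa [pow_one] using hq_ik⟩
        · obtain ⟨m, hm, hqm⟩ := IH s (by omega) k' j hk'r hj hs1 hps
          exact ⟨m + 1, by omega, step_pos q hqnn hq_ik hqm⟩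
      · have hq_ik : 0 < q ⟨i, hi⟩ ⟨k, hk⟩ := by
          rw [hq_apply]
          have := div_nonneg (mul_nonneg (hnn i r) (hnn r k)) hden.le
          linarith
        rcases Nat.eq_zero_or_pos t with h0 | ht
        · subst h0
          obtain rfl := pow_zero_entry_pos p hkj
          exact ⟨1, le_refl 1, by simpa [pow_one] using hq_ik⟩
        · obtain ⟨m, hm, hqm⟩ := IH t (by omega) k j hk hj ht hkj
          exact ⟨m + 1, by omega, step_pos q hqnn hq_ik hqm⟩
  refine ⟨h1, ?_⟩
  intro a b
  obtain ⟨n, hn, hp0⟩ := hirr a.1 b.1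
  obtain ⟨m, hm, hqm⟩ := C n a.1 b.1 a.2 b.2 hn hp0
  exact ⟨m, hm, by simpa using hqm⟩
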